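/- arXiv:1911.03104 — 4 statements merged into one kernel-verified Lean document; each statement's English description precedes it below -/
import Mathlib

section
/- For any permutation σ, every block in the maximal block decomposition of p₁(σ) contains at most 3 tokens. -/
/-- One pass through a deterministic pop stack, with explicit stack
(head of `stack` is the top; the stack is increasing from top to bottom). -/
def p1Aux : List ℤ → List ℤ → List ℤ
  | stack, [] => stack
  | [], x :: xs => p1Aux [x] xs
  | t :: ts, x :: xs =>
    if t < x then (t :: ts) ++ p1Aux [x] xs else p1Aux (x :: t :: ts) xs

/-- One pass of a permutation through a deterministic pop stack. -/
def p1 (σ : List ℤ) : List ℤ := p1Aux [] σ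

/-- Two lists (of the same length) are order-isomorphic. -/
def OrdIso (a b : List ℤ) : Prop :=
  a.length = b.length ∧
    ∀ i j (hia : i < a.length) (hja : j < a.length) (hib : i < b.length)
      (hjb : j < b.length),
      (a.get ⟨i, hia⟩ < a.get ⟨j, hja⟩ ↔ b.get ⟨i, hib⟩ < b.get ⟨j, hjb⟩)

/-- `PContains β α` : β contains the pattern α. -/
def PContains (β α : List ℤ) : Prop := ∃ γ, γ.Sublist β ∧ OrdIso γ α

/-- A reduced permutation of length n is a rearrangement of 1,2,…,n. -/
def Reduced (σ : List ℤ) : Prop :=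
  σ.Perm ((List.range σ.length).map fun i => (i : ℤ) + 1)

/-- σ 2-contains the pair (F, G). -/
def Contains2 (σ : List ℤ) (F G : Set (List ℤ)) : Prop :=
  ∃ γ, γ.Sublist σ ∧ (∃ f ∈ F, OrdIso γ f) ∧
    ¬ ∃ δ, δ.Sublist σ ∧ γ.Sublist δ ∧ ∃ g ∈ G, OrdIso δ g

/-- The set of reduced permutations 2-avoiding (F, G). -/
def Av2 (F G : Set (List ℤ)) : Set (List ℤ) :=
  {σ | Reduced σ ∧ ¬ Contains2 σ F G}

/-- `Bs` is the maximal block decomposition of σ: nonempty strictly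
decreasing blocks, with the last entry of each block smaller than the
first entry of the next. -/
def IsBlockDecomp (σ : List ℤ) (Bs : List (List ℤ)) : Prop :=
  σ = Bs.flatten ∧ (∀ B ∈ Bs, B ≠ [] ∧ B.Pairwise (· > ·)) ∧
    Bs.Chain' (fun B C => ∀ x ∈ B.getLast?, ∀ y ∈ C.head?, x < y)

/-- Descent at the head. -/
def D2 (l : List ℤ) : Prop := ∃ a b t, l = a :: b :: t ∧ b < a

/-- Two descents at the head. -/
def D3 (l : List ℤ) : Prop := ∃ a b c t, l = a :: b :: c :: t ∧ b < a ∧ c < b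

/-- Three descents at the head. -/
def D4 (l : List ℤ) : Prop :=
  ∃ a b c d t, l = a :: b :: c :: d :: t ∧ b < a ∧ c < b ∧ d < c

/-- No suffix starts with three descents. -/
def ND4 (l : List ℤ) : Prop := ∀ t, t.IsSuffix l → ¬ D4 t

lemma sorted_not_D4 {l : List ℤ} (h : l.Pairwise (· ≤ ·)) : ¬ D4 l := by
  rintro ⟨a, b, c, d, t, rfl, h1, h2, h3⟩
  have := (List.pairwise_cons.mp h).1 b (by simp)
  omega

lemma mainAux : ∀ (xs s : List ℤ), s ≠ [] → s.Pairwise (· ≤ ·) →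
    ND4 (p1Aux s xs) ∧ ¬ D3 (p1Aux s xs) ∧
      (D2 (p1Aux s xs) → ∃ rest, p1Aux s xs = s ++ rest) := by
  intro xs
  induction xs with
  | nil =>
    intro s hne hs
    have hr : p1Aux s [] = s := by simp [p1Aux]
    rw [hr]
    refine ⟨fun t ht => sorted_not_D4 (hs.sublist ht.sublist), ?_, fun _ => ⟨[], by simp⟩⟩
    rintro ⟨a, b, c, t, rfl, h1, h2⟩
    have := (List.pairwise_cons.mp hs).1 b (by simp)
    omega
  | cons x xs ih =>
    intro s hne hs
    obtain ⟨t, ts, rfl⟩ := List.exists_cons_of_ne_nil hne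
    by_cases h : t < x
    · -- emit the whole stack, restart with [x]
      have hr : p1Aux (t :: ts) (x :: xs) = (t :: ts) ++ p1Aux [x] xs := by
        simp [p1Aux, h]
      obtain ⟨A', B', C'⟩ := ih [x] (by simp) (by simp)
      rw [hr]
      refine ⟨?_, ?_, fun _ => ⟨p1Aux [x] xs, rfl⟩⟩
      · -- ND4
        intro u hu hD4
        have hsuf : (p1Aux [x] xs).IsSuffix ((t :: ts) ++ p1Aux [x] xs) :=
          List.suffix_append _ _
        rcases List.suffix_or_suffix_of_suffix hu hsuf with h1 | h1
        · exact A' u h1 hD4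
        · obtain ⟨v, rfl⟩ := h1
          have hv : v.IsSuffix (t :: ts) := by
            obtain ⟨p, hp⟩ := hu
            refine ⟨p, ?_⟩
            have : (p ++ v) ++ p1Aux [x] xs = (t :: ts) ++ p1Aux [x] xs := by
              simpa [List.append_assoc] using hp
            exact List.append_cancel_right this
          match v with
          | [] => exact A' _ (by simp) hD4
          | [m] =>
            obtain ⟨a, b, c, d, u', heq, h1, h2, h3⟩ := hD4
            apply B'
            have hb : p1Aux [x] xs = b :: c :: d :: u' := by
              simpa using congrArg List.tail heq
            exact ⟨b, c, d, u', hb, h2, h3⟩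
          | a :: b :: v' =>
            obtain ⟨a', b', c', d', u', heq, h1, h2, h3⟩ := hD4
            have ha : a' = a := by simpa using (congrArg List.head? heq).symm
            have hb : b' = b := by
              have := congrArg List.tail heq
              simpa using congrArg List.head? this.symm
            have hab : a ≤ b := (List.pairwise_cons.mp (hs.sublist hv.sublist)).1 b (by simp)
            omega
      · -- ¬ D3
        rintro ⟨a, b, c, u', heq, h1, h2⟩
        have ha : a = t := by simpa using (congrArg List.head? heq).symm
        match ts with
        | [] =>
          have hb : p1Aux [x] xs = b :: c :: u' := by
            simpa using congrArg List.tail heq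
          have : D2 (p1Aux [x] xs) := ⟨b, c, u', hb, h2⟩
          obtain ⟨rest, hrest⟩ := C' this
          rw [hrest] at hb
          have hbx : b = x := by simpa using (congrArg List.head? hb).symm
          omega
        | t' :: ts' =>
          have hb : b = t' := by
            have := congrArg List.tail heq
            simpa using congrArg List.head? this.symm
          have : t ≤ t' := (List.pairwise_cons.mp hs).1 t' (by simp)
          omega
    · -- push x onto the stack
      have hr : p1Aux (t :: ts) (x :: xs) = p1Aux (x :: t :: ts) xs := by
        simp [p1Aux, h]
      have hs' : (x :: t :: ts).Pairwise (· ≤ ·) := by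
        rw [List.pairwise_cons]
        refine ⟨?_, hs⟩
        intro b hb
        have hxt : x ≤ t := by omega
        rcases List.mem_cons.mp hb with rfl | hb
        · exact hxt
        · exact le_trans hxt ((List.pairwise_cons.mp hs).1 b hb)
      obtain ⟨A', B', C'⟩ := ih (x :: t :: ts) (by simp) hs'
      rw [hr]
      refine ⟨A', B', ?_⟩
      intro hD2
      obtain ⟨rest, hrest⟩ := C' hD2
      obtain ⟨a, b, u', heq, h1⟩ := hD2
      rw [hrest] at heq
      have ha : a = x := by simpa using (congrArg List.head? heq).symm
      have hb : b = t := by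
        have := congrArg List.tail heq
        simpa using congrArg List.head? this.symm
      omega

/-- every block of the maximal block decomposition of `p1 σ`
has at most 3 tokens. -/
theorem stmt_1 (σ : List ℤ) (hσ : σ.Nodup) (Bs : List (List ℤ))
    (hB : IsBlockDecomp (p1 σ) Bs) :
    ∀ B ∈ Bs, B.length ≤ 3 := by
  intro B hBmem
  by_contra hlen
  push_neg at hlen
  obtain ⟨hflat, hblocks, _⟩ := hB
  obtain ⟨hne, hsorted⟩ := hblocks B hBmem
  -- B has at least 4 elements
  obtain ⟨a, l₁⟩ : ∃ a l', B = a :: l' := by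
    cases B with
    | nil => simp at hlen
    | cons a l' => exact ⟨a, l', rfl⟩
  obtain ⟨l', rfl⟩ := l₁
  obtain ⟨b, l', rfl⟩ : ∃ b l'', l' = b :: l'' := by
    cases l' with
    | nil => simp at hlen
    | cons b l'' => exact ⟨b, l'', rfl⟩
  obtain ⟨c, l', rfl⟩ : ∃ c l'', l' = c :: l'' := by
    cases l' with
    | nil => simp at hlen
    | cons c l'' => exact ⟨c, l'', rfl⟩
  obtain ⟨d, l', rfl⟩ : ∃ d l'', l' = d :: l'' := by
    cases l' with
    | nil => simp at hlen
    | cons d l'' => exact ⟨d, l'', rfl⟩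
  -- descents from sortedness
  have h1 : b < a := (List.pairwise_cons.mp hsorted).1 b (by simp)
  have h2 : c < b := (List.pairwise_cons.mp (List.pairwise_cons.mp hsorted).2).1 c (by simp)
  have h3 : d < c :=
    (List.pairwise_cons.mp (List.pairwise_cons.mp (List.pairwise_cons.mp hsorted).2).2).1 d (by simp)
  -- ND4 for p1 σ
  have hnd4 : ND4 (p1 σ) := by
    cases σ with
    | nil =>
      have : p1 ([] : List ℤ) = [] := by simp [p1, p1Aux]
      rw [this]
      intro u hu
      have := List.eq_nil_of_suffix_nil hu
      subst this
      rintro ⟨a, b, c, d, t, heq, _⟩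
      simp at heq
    | cons x xs =>
      have : p1 (x :: xs) = p1Aux [x] xs := by simp [p1, p1Aux]
      rw [this]
      exact (mainAux xs [x] (by simp) (by simp)).1
  -- the block gives a D4 suffix
  obtain ⟨P, S, hPS⟩ := List.append_of_mem hBmem
  have hsuf : ((a :: b :: c :: d :: l') ++ S.flatten).IsSuffix (p1 σ) := by
    refine ⟨P.flatten, ?_⟩
    rw [hflat, hPS]
    simp
  exact hnd4 _ hsuf ⟨a, b, c, d, l' ++ S.flatten, by simp, h1, h2, h3⟩
end

section
/- Let σ be a permutation with maximal block decomposition B₁B₂…B_m, and let a ∈ B_{i+1} and b ∈ B_{i+n} be entries with a > b and n ≥ 1. If n ≥ 3^k, then σ is not sortable by k passes through a deterministic pop stack. -/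
section StmtTwoAux


def ascCount : List ℤ → ℕ
  | x :: y :: l => (if x < y then 1 else 0) + ascCount (y :: l)
  | _ => 0

theorem le_ascCount_append : ∀ (l r : List ℤ), ascCount l + ascCount r ≤ ascCount (l ++ r)
  | [], r => by simp [ascCount]
  | [x], r => by
    cases r with
    | nil => simp [ascCount]
    | cons y r => simp [ascCount]
  | x :: y :: l, r => by
    have := le_ascCount_append (y :: l) r
    simp only [List.cons_append, ascCount, List.append_eq] at *
    omega

theorem one_le_ascCount_of_sorted : ∀ (l : List ℤ), l.Pairwise (· < ·) → 2 ≤ l.length → 1 ≤ ascCount l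
  | [], _, h => by simp at h
  | [x], _, h => by simp at h
  | x :: y :: l, hs, _ => by
    have : x < y := (List.pairwise_cons.mp hs).1 y (by simp)
    simp [ascCount, this]


def blocksCons (x : ℤ) : List (List ℤ) → List (List ℤ)
  | [] => [[x]]
  | [] :: _ => [[x]]
  | (y :: B) :: Bs => if y < x then (x :: y :: B) :: Bs else [x] :: (y :: B) :: Bs

def blocks : List ℤ → List (List ℤ)
  | [] => []
  | x :: xs => blocksCons x (blocks xs)

theorem blocks_ne_nil : ∀ (l : List ℤ), ∀ B ∈ blocks l, B ≠ []
  | [] => by simp [blocks]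
  | x :: xs => by
    have IH := blocks_ne_nil xs
    match h : blocks xs with
    | [] => simp [blocks, blocksCons, h]
    | [] :: Bs => exact absurd rfl (IH [] (h ▸ List.mem_cons_self))
    | (y :: B) :: Bs =>
      intro C hC
      rw [blocks, h, blocksCons] at hC
      by_cases hyx : y < x
      · rw [if_pos hyx] at hC
        rcases List.mem_cons.mp hC with rfl | hC
        · simp
        · exact IH C (h ▸ List.mem_cons_of_mem _ hC)
      · rw [if_neg hyx] at hC
        rcases List.mem_cons.mp hC with rfl | hC
        · simp
        · exact IH C (h ▸ hC)

theorem flatten_blocks : ∀ (l : List ℤ), (blocks l).flatten = l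
  | [] => rfl
  | x :: xs => by
    have IH := flatten_blocks xs
    match h : blocks xs with
    | [] => rw [blocks, h, blocksCons]; rw [h] at IH; simp at IH; simp [IH]
    | [] :: Bs => exact absurd rfl (blocks_ne_nil xs [] (h ▸ List.mem_cons_self))
    | (y :: B) :: Bs =>
      rw [blocks, h, blocksCons]
      rw [h] at IH
      by_cases hyx : y < x
      · rw [if_pos hyx]; simpa using congrArg (x :: ·) IH
      · rw [if_neg hyx]; simpa using congrArg (x :: ·) IH

theorem blocks_sorted : ∀ (l : List ℤ), ∀ B ∈ blocks l, B.Pairwise (· > ·)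
  | [] => by simp [blocks]
  | x :: xs => by
    have IH := blocks_sorted xs
    match h : blocks xs with
    | [] => simp [blocks, blocksCons, h]
    | [] :: Bs => exact absurd rfl (blocks_ne_nil xs [] (h ▸ List.mem_cons_self))
    | (y :: B) :: Bs =>
      intro C hC
      rw [blocks, h, blocksCons] at hC
      by_cases hyx : y < x
      · rw [if_pos hyx] at hC
        rcases List.mem_cons.mp hC with rfl | hC
        · have hyB : (y :: B).Pairwise (· > ·) := IH _ (h ▸ List.mem_cons_self)
          refine List.pairwise_cons.mpr ⟨?_, hyB⟩
          intro b hb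
          rcases List.mem_cons.mp hb with rfl | hb
          · exact hyx
          · exact lt_trans ((List.pairwise_cons.mp hyB).1 b hb) hyx
        · exact IH C (h ▸ List.mem_cons_of_mem _ hC)
      · rw [if_neg hyx] at hC
        rcases List.mem_cons.mp hC with rfl | hC
        · simp
        · exact IH C (h ▸ hC)

theorem blocks_chain : ∀ (l : List ℤ), l.Nodup →
    (blocks l).Chain' (fun B C => ∀ x ∈ B.getLast?, ∀ y ∈ C.head?, x < y)
  | [] => by simp [blocks, List.Chain']
  | x :: xs => by
    intro hnd
    have IH := blocks_chain xs hnd.of_cons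
    match h : blocks xs with
    | [] => simp [blocks, blocksCons, h, List.Chain']
    | [] :: Bs => exact absurd rfl (blocks_ne_nil xs [] (h ▸ List.mem_cons_self))
    | (y :: B) :: Bs =>
      rw [blocks, h, blocksCons]
      rw [h] at IH
      by_cases hyx : y < x
      · rw [if_pos hyx]
        rw [List.Chain', List.isChain_cons] at IH ⊢
        refine ⟨?_, IH.2⟩
        intro z hz
        have := IH.1 z hz
        simpa using this
      · rw [if_neg hyx]
        have hxy : x < y := by
          have hyxs : y ∈ xs := by
            have : y ∈ (blocks xs).flatten := by rw [h]; simp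
            rwa [flatten_blocks] at this
          have hne : x ≠ y := by rintro rfl; exact (List.nodup_cons.mp hnd).1 hyxs
          omega
        rw [List.Chain', List.isChain_cons]
        refine ⟨?_, IH⟩
        intro z hz
        simp at hz
        subst hz
        simp
        omega

theorem p1Aux_push : ∀ (B : List ℤ) (t : ℤ) (ts rest : List ℤ),
    B.Pairwise (· > ·) → (∀ h ∈ B.head?, h < t) →
    p1Aux (t :: ts) (B ++ rest) = p1Aux (B.reverse ++ t :: ts) rest
  | [], t, ts, rest, _, _ => by simp
  | b :: B, t, ts, rest, hs, hh => by
    have hb : b < t := hh b (by simp)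
    have : p1Aux (t :: ts) ((b :: B) ++ rest) = p1Aux (b :: t :: ts) (B ++ rest) := by
      rw [List.cons_append, p1Aux, if_neg (by omega)]
    rw [this, p1Aux_push B b (t :: ts) rest (List.pairwise_cons.mp hs).2
      (by intro h hmem; exact (List.pairwise_cons.mp hs).1 h (List.mem_of_mem_head? hmem))]
    simp

theorem p1_flatten : ∀ (Bs : List (List ℤ)),
    (∀ B ∈ Bs, B ≠ [] ∧ B.Pairwise (· > ·)) →
    Bs.Chain' (fun B C => ∀ x ∈ B.getLast?, ∀ y ∈ C.head?, x < y) →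
    p1Aux [] Bs.flatten = (Bs.map List.reverse).flatten
  | [], _, _ => rfl
  | B :: Bs, hgood, hch => by
    obtain ⟨hne, hsort⟩ := hgood B (List.mem_cons_self)
    obtain ⟨b, B', rfl⟩ : ∃ b B', B = b :: B' := by
      cases B with | nil => exact absurd rfl hne | cons b B' => exact ⟨b, B', rfl⟩
    have h1 : p1Aux [] ((b :: B') ++ Bs.flatten) = p1Aux [b] (B' ++ Bs.flatten) := by
      rw [List.cons_append, p1Aux]
    rw [List.flatten_cons, h1,
      p1Aux_push B' b [] Bs.flatten (List.pairwise_cons.mp hsort).2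
        (by intro h hmem; exact (List.pairwise_cons.mp hsort).1 h (List.mem_of_mem_head? hmem))]
    cases Bs with
    | nil => simp [p1Aux]
    | cons C Cs =>
      obtain ⟨hneC, hsortC⟩ := hgood C (by simp)
      obtain ⟨c, C', rfl⟩ : ∃ c C', C = c :: C' := by
        cases C with | nil => exact absurd rfl hneC | cons c C' => exact ⟨c, C', rfl⟩
      have hlast : ((b :: B').reverse).head? = some ((b :: B').getLast (by simp)) := by
        rw [List.head?_reverse, List.getLast?_eq_getLast (by simp)]
      have hchain : (b :: B').getLast (by simp) < c := by
        have := (List.isChain_cons_cons.mp hch).1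
        exact this _ (List.getLast?_eq_getLast (by simp)) c rfl
      obtain ⟨t, ts, hrev⟩ : ∃ t ts, (b :: B').reverse = t :: ts := by
        cases h : (b :: B').reverse with
        | nil => simp at h
        | cons t ts => exact ⟨t, ts, rfl⟩
      have ht : t = (b :: B').getLast (by simp) := by
        rw [hrev] at hlast; simp at hlast; omega
      rw [show B'.reverse ++ [b] = t :: ts by rw [← List.reverse_cons, hrev]]
      rw [List.flatten_cons, List.cons_append, p1Aux, if_pos (ht ▸ hchain)]
      have h2 : p1Aux [c] (C' ++ Cs.flatten) = p1Aux [] ((c :: C') ++ Cs.flatten) := by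
        rw [List.cons_append, p1Aux]
      rw [h2, ← List.flatten_cons]
      rw [p1_flatten ((c :: C') :: Cs) (fun D hD => hgood D (List.mem_cons_of_mem _ hD))
        (List.isChain_cons_cons.mp hch).2]
      simp [← hrev]

theorem p1_eq (σ : List ℤ) (Bs : List (List ℤ)) (h : IsBlockDecomp σ Bs) :
    p1 σ = (Bs.map List.reverse).flatten := by
  rw [p1, h.1, p1_flatten Bs h.2.1 h.2.2]

theorem flatten_map_reverse_perm : ∀ (Bs : List (List ℤ)),
    ((Bs.map List.reverse).flatten).Perm Bs.flatten
  | [] => .rfl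
  | B :: Bs => by
    simpa using List.Perm.append (List.reverse_perm B) (flatten_map_reverse_perm Bs)

def bIdx : List (List ℤ) → ℤ → ℕ
  | [], _ => 0
  | C :: Cs, a => if a ∈ C then 0 else bIdx Cs a + 1

theorem mem_flatten_tail {C : List ℤ} {Cs : List (List ℤ)} {a : ℤ}
    (h : a ∈ (C :: Cs).flatten) (hC : a ∉ C) : a ∈ Cs.flatten := by
  rw [List.flatten_cons] at h
  rcases List.mem_append.mp h with h' | h'
  · exact absurd h' hC
  · exact h'

theorem bIdx_lt : ∀ (Cs : List (List ℤ)) (a : ℤ), a ∈ Cs.flatten → bIdx Cs a < Cs.length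
  | [], a, h => by simp at h
  | C :: Cs, a, h => by
    rw [bIdx]
    by_cases hC : a ∈ C
    · rw [if_pos hC]; simp
    · rw [if_neg hC]
      simpa using bIdx_lt Cs a (mem_flatten_tail h hC)

theorem bIdx_get_mem : ∀ (Cs : List (List ℤ)) (a : ℤ) (h : a ∈ Cs.flatten),
    a ∈ Cs.get ⟨bIdx Cs a, bIdx_lt Cs a h⟩
  | [], a, h => by simp at h
  | C :: Cs, a, h => by
    by_cases hC : a ∈ C
    · simp only [bIdx, if_pos hC]; exact hC
    · simp only [bIdx, if_neg hC]
      exact bIdx_get_mem Cs a (mem_flatten_tail h hC)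

theorem atom : ∀ (Cs : List (List ℤ)),
    (∀ B ∈ Cs, B ≠ []) → (∀ B ∈ Cs, B.Pairwise (· > ·)) →
    Cs.Chain' (fun B C => ∀ x ∈ B.getLast?, ∀ y ∈ C.head?, x < y) →
    Cs.flatten.Nodup →
    ∀ (u : List ℤ) (x y : ℤ) (w : List ℤ), Cs.flatten = u ++ x :: y :: w →
    bIdx Cs y = bIdx Cs x + (if x < y then 1 else 0)
  | [], _, _, _, _, u, x, y, w, h => absurd h.symm (by simp)
  | C :: Cs, hne, hsort, hch, hnd, u, x, y, w, h => by
    rw [List.flatten_cons] at h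
    have hdisj : C.Disjoint Cs.flatten := List.disjoint_of_nodup_append (by simpa using hnd)
    have htail : ∀ t : List ℤ, Cs.flatten = t ++ x :: y :: w →
        bIdx (C :: Cs) y = bIdx (C :: Cs) x + (if x < y then 1 else 0) := by
      intro t ht
      have hx : x ∈ Cs.flatten := by rw [ht]; simp
      have hy : y ∈ Cs.flatten := by rw [ht]; simp
      have hxC : x ∉ C := fun hxc => hdisj hxc hx
      have hyC : y ∉ C := fun hyc => hdisj hyc hy
      rw [bIdx, bIdx, if_neg hxC, if_neg hyC]
      have := atom Cs (fun B hB => hne B (List.mem_cons_of_mem _ hB))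
        (fun B hB => hsort B (List.mem_cons_of_mem _ hB)) (List.IsChain.tail hch)
        ((List.nodup_append.mp (by simpa using hnd)).2.1) t x y w ht
      omega
    rcases List.append_eq_append_iff.mp h with ⟨t, hu, ht⟩ | ⟨t, hC, ht⟩
    · exact htail t ht
    · cases t with
      | nil => exact htail [] (by simpa using ht.symm)
      | cons x' t2 =>
        cases t2 with
        | nil =>
          rw [List.singleton_append] at ht
          injection ht with h1 h2
          subst h1
          have hflat : Cs.flatten = y :: w := h2.symm
          have hxC : x ∈ C := by rw [hC]; simp
          have hyC : y ∉ C := fun hyc => hdisj hyc (by rw [hflat]; simp)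
          obtain ⟨C', Cs', rfl⟩ : ∃ C' Cs', Cs = C' :: Cs' := by
            cases Cs with
            | nil => simp at hflat
            | cons C' Cs' => exact ⟨C', Cs', rfl⟩
          have hC'ne : C' ≠ [] := hne C' (by simp)
          have hheadC' : C'.head? = some y := by
            rw [List.flatten_cons] at hflat
            cases C' with
            | nil => exact absurd rfl hC'ne
            | cons z C'' =>
              simp only [List.cons_append] at hflat
              injection hflat with hz _
              simp [hz]
          have hyC' : y ∈ C' := List.mem_of_mem_head? (by rw [hheadC']; rfl)
          have hxy : x < y := by
            have hrel := (List.isChain_cons_cons.mp hch).1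
            exact hrel x (by rw [hC, List.getLast?_concat]; rfl) y hheadC'
          simp [bIdx, hxC, hyC, hyC', hxy]
        | cons y' t3 =>
          injection ht with h1 ht2
          injection ht2 with h2 _
          subst h1
          subst h2
          have hxC : x ∈ C := by rw [hC]; simp
          have hyC : y ∈ C := by rw [hC]; simp
          have hsub : List.Sublist [x, y] C := by
            rw [hC]
            exact ((List.cons_sublist_cons.mpr (List.cons_sublist_cons.mpr
              (List.nil_sublist _))).trans (List.sublist_append_right u _))
          have hgt : y < x := by
            have hs := (hsort C (List.mem_cons_self)).sublist hsub
            exact (List.pairwise_cons.mp hs).1 y (by simp)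
          have hnlt : ¬ x < y := by omega
          simp [bIdx, hxC, hyC, hnlt]

theorem sorted_reverse_of_sorted_gt {B : List ℤ} (h : B.Pairwise (· > ·)) :
    B.reverse.Pairwise (· < ·) := by
  rw [List.pairwise_reverse]
  exact h

theorem one_le_asc_pair : ∀ (B B' : List ℤ), B ≠ [] → B' ≠ [] →
    B.Pairwise (· > ·) → B'.Pairwise (· > ·) →
    (∀ x ∈ B.getLast?, ∀ y ∈ B'.head?, x < y) →
    1 ≤ ascCount (B.reverse ++ B'.reverse)
  | [], _, hB, _, _, _, _ => absurd rfl hB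
  | _, [], _, hB', _, _, _ => absurd rfl hB'
  | [b], [c], _, _, _, _, hch => by
    have : b < c := hch b (by simp) c rfl
    simp [ascCount, this]
  | b :: b' :: B, B', _, _, hs, _, _ => by
    have h1 : 1 ≤ ascCount ((b :: b' :: B).reverse) :=
      one_le_ascCount_of_sorted _ (sorted_reverse_of_sorted_gt hs) (by simp)
    have := le_ascCount_append ((b :: b' :: B).reverse) B'.reverse
    omega
  | [b], c :: c' :: B', _, _, _, hs', _ => by
    have h1 : 1 ≤ ascCount ((c :: c' :: B').reverse) :=
      one_le_ascCount_of_sorted _ (sorted_reverse_of_sorted_gt hs') (by simp)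
    have := le_ascCount_append ([b].reverse) ((c :: c' :: B').reverse)
    omega

theorem middle_asc : ∀ (M : List (List ℤ)),
    (∀ B ∈ M, B ≠ [] ∧ B.Pairwise (· > ·)) →
    M.Chain' (fun B C => ∀ x ∈ B.getLast?, ∀ y ∈ C.head?, x < y) →
    M.length / 2 ≤ ascCount ((M.map List.reverse).flatten)
  | [], _, _ => by simp [ascCount]
  | [B], _, _ => by simp
  | B :: B' :: M', hgood, hch => by
    have h1 : 1 ≤ ascCount (B.reverse ++ B'.reverse) :=
      one_le_asc_pair B B' (hgood B (by simp)).1 (hgood B' (by simp)).1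
        (hgood B (by simp)).2 (hgood B' (by simp)).2 (List.isChain_cons_cons.mp hch).1
    have h2 := middle_asc M' (fun C hC => hgood C (by simp [hC]))
      ((List.isChain_cons_cons.mp hch).2.tail)
    have h3 : ((B :: B' :: M').map List.reverse).flatten
        = (B.reverse ++ B'.reverse) ++ (M'.map List.reverse).flatten := by simp
    have h4 := le_ascCount_append (B.reverse ++ B'.reverse) ((M'.map List.reverse).flatten)
    rw [h3]
    have h5 : (B :: B' :: M').length = M'.length + 2 := by simp
    omega

theorem split_two {α : Type*} (l : List α) (p q : ℕ) (hp : p < l.length) (hq : q < l.length)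
    (hpq : p < q) :
    ∃ L M R, l = L ++ l.get ⟨p, hp⟩ :: (M ++ l.get ⟨q, hq⟩ :: R) ∧ M.length = q - p - 1 := by
  refine ⟨l.take p, (l.drop (p + 1)).take (q - p - 1), l.drop (q + 1), ?_, ?_⟩
  · conv_lhs => rw [← List.take_append_drop p l]
    congr 1
    rw [List.drop_eq_getElem_cons hp, List.get_eq_getElem]
    congr 1
    conv_lhs => rw [← List.take_append_drop (q - p - 1) (l.drop (p + 1))]
    congr 1
    rw [List.drop_drop]
    have he : p + 1 + (q - p - 1) = q := by omega
    rw [he, List.drop_eq_getElem_cons hq, List.get_eq_getElem]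
  · rw [List.length_take, List.length_drop]; omega

theorem pair_sublist_of_sorted_gt {a b : ℤ} : ∀ (B : List ℤ), B.Pairwise (· > ·) →
    a ∈ B → b ∈ B → b < a → List.Sublist [a, b] B
  | [], _, ha, _, _ => by simp at ha
  | x :: B, hs, ha, hb, hba => by
    have hs1 := List.pairwise_cons.mp hs
    rcases List.mem_cons.mp ha with h1 | h1
    · subst h1
      have hbB : b ∈ B := by
        rcases List.mem_cons.mp hb with h2 | h2
        · omega
        · exact h2
      exact List.cons_sublist_cons.mpr (List.singleton_sublist.mpr hbB)
    · have hbB : b ∈ B := by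
        rcases List.mem_cons.mp hb with h2 | h2
        · subst h2
          have := hs1.1 a h1
          omega
        · exact h2
      exact (pair_sublist_of_sorted_gt B hs1.2 h1 hbB hba).cons x

theorem bIdx_sub (Cs : List (List ℤ))
    (hne : ∀ B ∈ Cs, B ≠ []) (hsort : ∀ B ∈ Cs, B.Pairwise (· > ·))
    (hch : Cs.Chain' (fun B C => ∀ x ∈ B.getLast?, ∀ y ∈ C.head?, x < y))
    (hnd : Cs.flatten.Nodup) :
    ∀ (v u : List ℤ) (a b : ℤ) (w : List ℤ), Cs.flatten = u ++ a :: (v ++ b :: w) →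
    bIdx Cs a ≤ bIdx Cs b ∧ bIdx Cs b = bIdx Cs a + ascCount (a :: (v ++ [b]))
  | [], u, a, b, w, h => by
    have h1 := atom Cs hne hsort hch hnd u a b w (by simpa using h)
    have h2 : ascCount (a :: (([] : List ℤ) ++ [b])) = if a < b then 1 else 0 := by
      simp [ascCount]
    simp only [List.nil_append] at h2 ⊢
    exact ⟨by omega, by omega⟩
  | c :: v', u, a, b, w, h => by
    have h1 := atom Cs hne hsort hch hnd u a c (v' ++ b :: w) (by simpa using h)
    have h2 := bIdx_sub Cs hne hsort hch hnd v' (u ++ [a]) c b w (by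
      rw [h]; simp)
    have h3 : ascCount (a :: ((c :: v') ++ [b]))
        = (if a < c then 1 else 0) + ascCount (c :: (v' ++ [b])) := rfl
    exact ⟨by omega, by omega⟩


theorem stmt2_main : ∀ (k : ℕ) (σ : List ℤ), σ.Nodup → ∀ (Bs : List (List ℤ)),
    IsBlockDecomp σ Bs → ∀ (p q : ℕ) (hp : p < Bs.length) (hq : q < Bs.length), p ≤ q →
    ∀ (a b : ℤ), a ∈ Bs.get ⟨p, hp⟩ → b ∈ Bs.get ⟨q, hq⟩ → b < a → 3 ^ k ≤ q - p + 1 →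
    ¬ (p1^[k] σ).Pairwise (· < ·) := by
  intro k
  induction k with
  | zero =>
    intro σ hσ Bs hB p q hp hq hpq a b ha hb hab hk hs
    simp only [Function.iterate_zero, id] at hs
    have hsub : List.Sublist [a, b] σ := by
      rcases eq_or_lt_of_le hpq with rfl | hlt
      · have h1 := pair_sublist_of_sorted_gt (Bs.get ⟨p, hp⟩)
          (hB.2.1 _ (Bs.get_mem _)).2 ha hb hab
        exact h1.trans (by rw [hB.1]; exact List.sublist_flatten_of_mem (Bs.get_mem _))
      · obtain ⟨L, M, R, hsplit, hM⟩ := split_two Bs p q hp hq hlt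
        have h0 : (L ++ Bs.get ⟨p, hp⟩ :: (M ++ Bs.get ⟨q, hq⟩ :: R)).flatten
            = L.flatten ++ (Bs.get ⟨p, hp⟩ ++ (M.flatten ++ (Bs.get ⟨q, hq⟩ ++ R.flatten))) := by
          simp
        have hσeq : σ = L.flatten ++ (Bs.get ⟨p, hp⟩ ++
            (M.flatten ++ (Bs.get ⟨q, hq⟩ ++ R.flatten))) := by
          rw [hB.1, ← h0, ← hsplit]
        rw [hσeq]
        have h1 : List.Sublist [a] (Bs.get ⟨p, hp⟩) := List.singleton_sublist.mpr ha
        have h2 : List.Sublist [b] (M.flatten ++ (Bs.get ⟨q, hq⟩ ++ R.flatten)) :=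
          ((List.singleton_sublist.mpr hb).trans
            (List.sublist_append_left _ _)).trans (List.sublist_append_right _ _)
        exact (List.Sublist.append h1 h2).trans (List.sublist_append_right _ _)
    have : a < b := by
      have h := hs.sublist hsub
      exact (List.pairwise_cons.mp h).1 b (by simp)
    omega
  | succ k IH =>
    intro σ hσ Bs hB p q hp hq hpq a b ha hb hab hk hs
    rw [Function.iterate_succ_apply] at hs
    have h3k : 3 ≤ 3 ^ (k + 1) := by
      calc (3 : ℕ) = 3 ^ 1 := (pow_one 3).symm
      _ ≤ 3 ^ (k + 1) := Nat.pow_le_pow_right (by norm_num) (by omega)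
    have hlt : p < q := by omega
    have hp1 : p1 σ = (Bs.map List.reverse).flatten := p1_eq σ Bs hB
    set τ := (Bs.map List.reverse).flatten with hτ
    have hperm : τ.Perm σ := by rw [hB.1]; exact flatten_map_reverse_perm Bs
    have hndτ : τ.Nodup := hperm.nodup_iff.mpr hσ
    obtain ⟨L, M, R, hsplit, hM⟩ := split_two Bs p q hp hq hlt
    obtain ⟨s, t, hst⟩ := List.append_of_mem (List.mem_reverse.mpr ha)
    obtain ⟨s', t', hst'⟩ := List.append_of_mem (List.mem_reverse.mpr hb)
    have hτeq : τ = ((L.map List.reverse).flatten ++ s) ++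
        a :: ((t ++ (M.map List.reverse).flatten ++ s') ++
          b :: (t' ++ (R.map List.reverse).flatten)) := by
      rw [List.get_eq_getElem] at hst hst'
      rw [hτ, hsplit]
      simp [hst, hst']
    set Cs := blocks τ with hCsdef
    have hCne : ∀ B ∈ Cs, B ≠ [] := blocks_ne_nil τ
    have hCsort : ∀ B ∈ Cs, B.Pairwise (· > ·) := blocks_sorted τ
    have hCch := blocks_chain τ hndτ
    have hCflat : Cs.flatten = τ := flatten_blocks τ
    have hBd : IsBlockDecomp τ Cs :=
      ⟨hCflat.symm, fun B hBmem => ⟨hCne B hBmem, hCsort B hBmem⟩, hCch⟩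
    have hmain := bIdx_sub Cs hCne hCsort hCch (by rw [hCflat]; exact hndτ)
      (t ++ (M.map List.reverse).flatten ++ s') ((L.map List.reverse).flatten ++ s) a b
      (t' ++ (R.map List.reverse).flatten) (by rw [hCflat]; exact hτeq)
    have hMgood : ∀ B ∈ M, B ≠ [] ∧ B.Pairwise (· > ·) := by
      intro C hC
      refine hB.2.1 C ?_
      rw [hsplit]
      simp [hC]
    have hMchain : M.Chain' (fun B C => ∀ x ∈ B.getLast?, ∀ y ∈ C.head?, x < y) := by
      refine List.IsChain.infix hB.2.2 ⟨L ++ [Bs.get ⟨p, hp⟩], Bs.get ⟨q, hq⟩ :: R, ?_⟩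
      conv_rhs => rw [hsplit]
      simp
    have hasc : M.length / 2 ≤ ascCount (a :: ((t ++ (M.map List.reverse).flatten ++ s') ++ [b])) := by
      have e1 : a :: ((t ++ (M.map List.reverse).flatten ++ s') ++ [b])
          = (a :: t) ++ ((M.map List.reverse).flatten ++ (s' ++ [b])) := by simp
      rw [e1]
      have h4 := le_ascCount_append (a :: t) ((M.map List.reverse).flatten ++ (s' ++ [b]))
      have h5 := le_ascCount_append ((M.map List.reverse).flatten) (s' ++ [b])
      have h6 := middle_asc M hMgood hMchain
      omega
    have haτ : a ∈ Cs.flatten := by rw [hCflat, hτeq]; simp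
    have hbτ : b ∈ Cs.flatten := by rw [hCflat, hτeq]; simp
    refine IH τ hndτ Cs hBd (bIdx Cs a) (bIdx Cs b) (bIdx_lt _ _ haτ) (bIdx_lt _ _ hbτ)
      hmain.1 a b (bIdx_get_mem _ _ haτ) (bIdx_get_mem _ _ hbτ) hab ?_ (by rw [← hp1]; exact hs)
    have h1 := hmain.2
    have hpow : 3 ^ (k + 1) = 3 * 3 ^ k := by ring
    omega

end StmtTwoAux

/-- if `a` lies in an earlier block, `b` in a later block,
`a > b`, and the number of blocks from the first to the second (inclusive)
is at least `3^k`, then σ is not `k`-pass pop stack sortable. -/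
theorem stmt_2 (σ : List ℤ) (hσ : σ.Nodup) (Bs : List (List ℤ))
    (hB : IsBlockDecomp σ Bs) (k p q : ℕ)
    (hp : p < Bs.length) (hq : q < Bs.length) (hpq : p ≤ q)
    (a b : ℤ) (ha : a ∈ Bs.get ⟨p, hp⟩) (hb : b ∈ Bs.get ⟨q, hq⟩)
    (hab : b < a) (hk : 3 ^ k ≤ q - p + 1) :
    ¬ (p1^[k] σ).Pairwise (· < ·) := by
  exact stmt2_main k σ hσ Bs hB p q hp hq hpq a b ha hb hab hk
end

section
/- A permutation is sortable by one pass through a deterministic pop stack if and only if it avoids both patterns 231 and 312. -/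
/-! ### Auxiliary machinery for the proof -/

section StmtThreeAux

/-- First maximal strictly decreasing run. -/
def runOf : List ℤ → List ℤ
  | [] => []
  | [x] => [x]
  | x :: y :: xs => if y < x then x :: runOf (y :: xs) else [x]

/-- Remainder after the first maximal strictly decreasing run. -/
def rstOf : List ℤ → List ℤ
  | [] => []
  | [_] => []
  | x :: y :: xs => if y < x then rstOf (y :: xs) else y :: xs

lemma runOf_append_rstOf (σ : List ℤ) : runOf σ ++ rstOf σ = σ := by
  induction σ with
  | nil => simp [runOf, rstOf]
  | cons x xs ih =>
    cases xs with
    | nil => simp [runOf, rstOf]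
    | cons y ys =>
      simp only [runOf, rstOf]
      split
      · simpa using ih
      · simp

lemma runOf_ne_nil {σ : List ℤ} (h : σ ≠ []) : runOf σ ≠ [] := by
  cases σ with
  | nil => simp at h
  | cons x xs => cases xs <;> simp [runOf] <;> split <;> simp

lemma runOf_le_head : ∀ (l : List ℤ) (a : ℤ), ∀ b ∈ runOf (a :: l), b ≤ a := by
  intro l
  induction l with
  | nil => intro a b hb; simp [runOf] at hb; omega
  | cons y ys ih =>
    intro a b hb
    simp only [runOf] at hb
    split at hb
    · rcases List.mem_cons.1 hb with h | h
      · omega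
      · have := ih y b h; omega
    · simp at hb; omega

lemma runOf_sorted (σ : List ℤ) : (runOf σ).Pairwise (· > ·) := by
  induction σ with
  | nil => simp [runOf]
  | cons x xs ih =>
    cases xs with
    | nil => simp [runOf]
    | cons y ys =>
      simp only [runOf]
      split
      · rename_i hlt
        rw [List.pairwise_cons]
        exact ⟨fun b hb => lt_of_le_of_lt (runOf_le_head _ _ b hb) hlt, ih⟩
      · simp

lemma runOf_cons (l : List ℤ) (a : ℤ) : ∃ q, runOf (a :: l) = a :: q := by
  cases l with
  | nil => exact ⟨[], rfl⟩
  | cons y ys =>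
    simp only [runOf]
    split
    · exact ⟨_, rfl⟩
    · exact ⟨[], rfl⟩

lemma runOf_boundary :
    ∀ (σ : List ℤ), ∀ x ∈ (runOf σ).getLast?, ∀ y ∈ (rstOf σ).head?, ¬ (y < x) := by
  intro σ
  induction σ with
  | nil => simp [runOf, rstOf]
  | cons a l ih =>
    cases l with
    | nil => simp [runOf, rstOf]
    | cons b bs =>
      intro x hx y hy
      by_cases h : b < a
      · simp only [runOf, rstOf, if_pos h] at hx hy
        obtain ⟨q, hq⟩ := runOf_cons bs b
        rw [hq] at hx
        rw [List.getLast?_cons_cons] at hx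
        exact ih x (by rw [hq]; exact hx) y hy
      · simp only [runOf, rstOf, if_neg h] at hx hy
        simp at hx hy
        omega

lemma p1Aux_perm : ∀ (xs s : List ℤ), (p1Aux s xs).Perm (s ++ xs) := by
  intro xs
  induction xs with
  | nil => intro s; simp [p1Aux]
  | cons x xs ih =>
    intro s
    cases s with
    | nil =>
      rw [show p1Aux [] (x :: xs) = p1Aux [x] xs from rfl]
      simpa using ih [x]
    | cons t ts =>
      rw [show p1Aux (t::ts) (x :: xs) =
        if t < x then (t :: ts) ++ p1Aux [x] xs else p1Aux (x :: t :: ts) xs from rfl]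
      split
      · refine ((ih [x]).append_left (t::ts)).trans ?_
        simp
      · refine (ih (x :: t :: ts)).trans ?_
        simpa using List.Perm.symm (List.perm_middle (a := x) (l₁ := t :: ts) (l₂ := xs))

lemma p1Aux_push_s3 : ∀ (r s rest : List ℤ), r.Pairwise (· > ·) →
    (∀ t ∈ s.head?, ∀ a ∈ r.head?, ¬ (t < a)) →
    p1Aux s (r ++ rest) = p1Aux (r.reverse ++ s) rest := by
  intro r
  induction r with
  | nil => intro s rest _ _; simp
  | cons a r' ih =>
    intro s rest hsort hs
    have hsort' : r'.Pairwise (· > ·) := (List.pairwise_cons.1 hsort).2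
    have ha : ∀ b ∈ r', a > b := (List.pairwise_cons.1 hsort).1
    have hstep : ∀ t ∈ (a :: s).head?, ∀ b ∈ r'.head?, ¬ (t < b) := by
      intro t ht b hb
      simp at ht
      subst ht
      cases r' with
      | nil => simp at hb
      | cons c cs =>
        have hbc : c = b := by simpa using hb
        subst hbc
        have := ha c (by simp)
        omega
    cases s with
    | nil =>
      rw [show ((a :: r') ++ rest) = a :: (r' ++ rest) from rfl]
      rw [show p1Aux [] (a :: (r' ++ rest)) = p1Aux [a] (r' ++ rest) from rfl]
      rw [ih [a] rest hsort' (by simpa using hstep)]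
      simp
    | cons t ts =>
      have hta : ¬ (t < a) := hs t (by simp) a (by simp)
      rw [show ((a :: r') ++ rest) = a :: (r' ++ rest) from rfl]
      rw [show p1Aux (t::ts) (a :: (r' ++ rest)) =
        if t < a then (t :: ts) ++ p1Aux [a] (r' ++ rest)
        else p1Aux (a :: t :: ts) (r' ++ rest) from rfl]
      rw [if_neg hta]
      rw [ih (a :: t :: ts) rest hsort' (by simpa using hstep)]
      simp

lemma p1_decomp (r rest : List ℤ) (hr : r ≠ []) (hsort : r.Pairwise (· > ·))
    (hb : ∀ y ∈ rest.head?, r.getLast hr < y) :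
    p1 (r ++ rest) = r.reverse ++ p1 rest := by
  have h1 : p1 (r ++ rest) = p1Aux (r.reverse) rest := by
    rw [p1, p1Aux_push_s3 r [] rest hsort (by simp)]
    simp
  rw [h1]
  cases rest with
  | nil => simp [p1Aux, p1]
  | cons y ys =>
    have hrev : r.reverse = r.getLast hr :: (r.dropLast).reverse := by
      conv_lhs => rw [← List.dropLast_append_getLast hr]
      simp
    rw [hrev]
    have hy : r.getLast hr < y := hb y (by simp)
    rw [show p1Aux (r.getLast hr :: r.dropLast.reverse) (y :: ys) =
      if r.getLast hr < y then (r.getLast hr :: r.dropLast.reverse) ++ p1Aux [y] ys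
      else p1Aux (y :: r.getLast hr :: r.dropLast.reverse) ys from rfl]
    rw [if_pos hy]
    rfl

lemma pcontains_231 (σ : List ℤ) :
    PContains σ [2, 3, 1] ↔ ∃ u v w : ℤ, [u,v,w].Sublist σ ∧ w < u ∧ u < v := by
  constructor
  · rintro ⟨γ, hsub, hlen, hiso⟩
    match γ, hlen with
    | [u,v,w], _ =>
      refine ⟨u, v, w, hsub, ?_, ?_⟩
      · have := (hiso 2 0 (by norm_num) (by norm_num) (by norm_num) (by norm_num)).2
        simpa using this (by norm_num)
      · have := (hiso 0 1 (by norm_num) (by norm_num) (by norm_num) (by norm_num)).2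
        simpa using this (by norm_num)
  · rintro ⟨u, v, w, hsub, h1, h2⟩
    refine ⟨[u,v,w], hsub, rfl, ?_⟩
    intro i j hia hja hib hjb
    simp only [List.length_cons, List.length_nil] at hia hja
    interval_cases i <;> interval_cases j <;> simp <;> omega

lemma pcontains_312 (σ : List ℤ) :
    PContains σ [3, 1, 2] ↔ ∃ u v w : ℤ, [u,v,w].Sublist σ ∧ v < w ∧ w < u := by
  constructor
  · rintro ⟨γ, hsub, hlen, hiso⟩
    match γ, hlen with
    | [u,v,w], _ =>
      refine ⟨u, v, w, hsub, ?_, ?_⟩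
      · have := (hiso 1 2 (by norm_num) (by norm_num) (by norm_num) (by norm_num)).2
        simpa using this (by norm_num)
      · have := (hiso 2 0 (by norm_num) (by norm_num) (by norm_num) (by norm_num)).2
        simpa using this (by norm_num)
  · rintro ⟨u, v, w, hsub, h1, h2⟩
    refine ⟨[u,v,w], hsub, rfl, ?_⟩
    intro i j hia hja hib hjb
    simp only [List.length_cons, List.length_nil] at hia hja
    interval_cases i <;> interval_cases j <;> simp <;> omega

/-- Avoiding both 231 and 312, phrased via explicit triples. -/
def Avoids (σ : List ℤ) : Prop :=
  (¬ ∃ u v w : ℤ, [u,v,w].Sublist σ ∧ w < u ∧ u < v) ∧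
  (¬ ∃ u v w : ℤ, [u,v,w].Sublist σ ∧ v < w ∧ w < u)

lemma avoids_of_sublist {σ τ : List ℤ} (h : τ.Sublist σ) (ha : Avoids σ) : Avoids τ := by
  obtain ⟨h1, h2⟩ := ha
  constructor
  · rintro ⟨u,v,w,hs,p⟩; exact h1 ⟨u,v,w,hs.trans h,p⟩
  · rintro ⟨u,v,w,hs,p⟩; exact h2 ⟨u,v,w,hs.trans h,p⟩

lemma decomp_avoid (r t : List ℤ) (hr : r ≠ []) (hsort : r.Pairwise (· > ·))
    (hnd : (r ++ t).Nodup)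
    (hbd : ∀ y ∈ t.head?, r.getLast hr < y) :
    Avoids (r ++ t) ↔ (∀ a ∈ r, ∀ b ∈ t, a < b) ∧ Avoids t := by
  have hdisj : r.Disjoint t := fun a ha hb => (List.nodup_append.1 hnd).2.2 a ha a hb rfl
  constructor
  · intro hA
    by_cases hcross : ∀ a ∈ r, ∀ b ∈ t, a < b
    · exact ⟨hcross, avoids_of_sublist (List.sublist_append_right r t) hA⟩
    · exfalso
      push_neg at hcross
      obtain ⟨a, ha, b, hb, hab⟩ := hcross
      have hane : a ≠ b := fun h => hdisj ha (h ▸ hb)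
      have hba : b < a := lt_of_le_of_ne hab (Ne.symm hane)
      obtain ⟨x, ts, rfl⟩ : ∃ x ts, t = x :: ts := by
        cases t with
        | nil => simp at hb
        | cons x ts => exact ⟨x, ts, rfl⟩
      set m := r.getLast hr with hm
      have hmx : m < x := hbd x (by simp)
      have hmr : m ∈ r := List.getLast_mem hr
      have subAM : ∀ c ∈ r, c ≠ m → [c, m].Sublist r := by
        intro c hc hcm
        have : c ∈ r.dropLast := by
          have := List.dropLast_append_getLast hr
          rw [← this] at hc
          rcases List.mem_append.1 hc with h | h
          · exact h
          · simp at h; exact absurd h hcm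
        calc [c, m].Sublist (r.dropLast ++ [m]) :=
              (List.singleton_sublist.2 this).append (List.Sublist.refl [m])
          _ = r := List.dropLast_append_getLast hr
      have subXB : ∀ c ∈ ts, [x, c].Sublist (x :: ts) := fun c hc =>
        (List.singleton_sublist.2 hc).cons₂ x
      have mk231 : ∀ u v w : ℤ, [u,v,w].Sublist (r ++ (x :: ts)) → w < u → u < v → False := by
        intro u v w hs p1 p2; exact (fun hA => hA.1 ⟨u,v,w,hs,p1,p2⟩) hA
      have mk312 : ∀ u v w : ℤ, [u,v,w].Sublist (r ++ (x :: ts)) → v < w → w < u → False := by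
        intro u v w hs p1 p2; exact (fun hA => hA.2 ⟨u,v,w,hs,p1,p2⟩) hA
      by_cases hbx : b = x
      · subst hbx
        have ham : a ≠ m := by intro h; omega
        have hs : [a, m, b].Sublist (r ++ (b :: ts)) :=
          (subAM a ha ham).append (List.singleton_sublist.2 (by simp))
        exact mk312 a m b hs hmx hba
      · have hbts : b ∈ ts := by
          rcases List.mem_cons.1 hb with h | h
          · exact absurd h hbx
          · exact h
        have hax : a ≠ x := fun h => hdisj ha (h ▸ (by simp : x ∈ x :: ts))
        rcases lt_or_gt_of_ne hax with h1 | h1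
        · have hs : [a] ++ [x, b] |>.Sublist (r ++ (x :: ts)) :=
            (List.singleton_sublist.2 ha).append (subXB b hbts)
          exact mk231 a x b hs hba h1
        · rcases lt_trichotomy b x with h2 | h2 | h2
          · have hmb : m ≠ b := fun h => hdisj hmr (h ▸ hb)
            rcases lt_or_gt_of_ne hmb with h3 | h3
            · have ham : a ≠ m := by intro h; omega
              have hs : [a, m].append [b] |>.Sublist (r ++ (x :: ts)) :=
                (subAM a ha ham).append (List.singleton_sublist.2 hb)
              exact mk312 a m b hs h3 hba
            · have hs : [m] ++ [x, b] |>.Sublist (r ++ (x :: ts)) :=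
                (List.singleton_sublist.2 hmr).append (subXB b hbts)
              exact mk231 m x b hs h3 hmx
          · exact hbx h2
          · have hs : [a] ++ [x, b] |>.Sublist (r ++ (x :: ts)) :=
              (List.singleton_sublist.2 ha).append (subXB b hbts)
            exact mk312 a x b hs h2 hba
  · rintro ⟨hcross, hAt⟩
    have split : ∀ u v w : ℤ, [u,v,w].Sublist (r ++ t) →
        ([u,v,w].Sublist t) ∨ ([u].Sublist r ∧ [v,w].Sublist t) ∨
        ([u,v].Sublist r ∧ [w].Sublist t) ∨ ([u,v,w].Sublist r) := by
      intro u v w hs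
      obtain ⟨l₁, l₂, heq, h₁, h₂⟩ := List.sublist_append_iff.1 hs
      rcases l₁ with _ | ⟨a1, _ | ⟨a2, _ | ⟨a3, l₁'⟩⟩⟩
      · simp only [List.nil_append] at heq
        subst heq; exact Or.inl h₂
      · injection heq with e1 e2; subst e1; subst e2
        exact Or.inr (Or.inl ⟨h₁, h₂⟩)
      · injection heq with e1 e2; injection e2 with e3 e4
        subst e1; subst e3; subst e4
        exact Or.inr (Or.inr (Or.inl ⟨h₁, h₂⟩))
      · injection heq with e1 e2; injection e2 with e3 e4; injection e4 with e5 e6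
        subst e1; subst e3; subst e5
        have : l₁' = [] := by
          cases l₁' with
          | nil => rfl
          | cons z zs => simp at e6
        subst this
        exact Or.inr (Or.inr (Or.inr h₁))
    constructor
    · rintro ⟨u, v, w, hs, p1, p2⟩
      rcases split u v w hs with h | ⟨h1, h2⟩ | ⟨h1, h2⟩ | h
      · exact hAt.1 ⟨u, v, w, h, p1, p2⟩
      · have : u < w := hcross u (h1.subset (by simp)) w (h2.subset (by simp))
        omega
      · have : u > v := List.rel_of_pairwise_cons (hsort.sublist h1) (by simp)
        omega
      · have : u > v := List.rel_of_pairwise_cons (hsort.sublist h) (by simp)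
        omega
    · rintro ⟨u, v, w, hs, p1, p2⟩
      rcases split u v w hs with h | ⟨h1, h2⟩ | ⟨h1, h2⟩ | h
      · exact hAt.2 ⟨u, v, w, h, p1, p2⟩
      · have : u < w := hcross u (h1.subset (by simp)) w (h2.subset (by simp))
        omega
      · have : u < w := hcross u (h1.subset (by simp)) w (h2.subset (by simp))
        omega
      · have : v > w :=
          List.rel_of_pairwise_cons ((List.pairwise_cons.1 (hsort.sublist h)).2) (by simp)
        omega

lemma main_step (r t : List ℤ) (hr : r ≠ []) (hsort : r.Pairwise (· > ·))
    (hnd : (r ++ t).Nodup) (hbd : ∀ y ∈ t.head?, r.getLast hr < y)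
    (iht : (p1 t).Pairwise (· < ·) ↔ Avoids t) :
    (p1 (r ++ t)).Pairwise (· < ·) ↔ Avoids (r ++ t) := by
  rw [p1_decomp r t hr hsort hbd, decomp_avoid r t hr hsort hnd hbd]
  have hmem_p1 : ∀ b : ℤ, b ∈ p1 t ↔ b ∈ t := by
    intro b
    have := p1Aux_perm t []
    simpa [p1] using this.mem_iff
  have hrev : (r.reverse).Pairwise (· < ·) := by
    rw [List.pairwise_reverse]
    exact hsort
  rw [show ((r.reverse ++ p1 t).Pairwise (· < ·)) ↔
      (r.reverse.Pairwise (· < ·) ∧ (p1 t).Pairwise (· < ·) ∧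
        ∀ x ∈ r.reverse, ∀ y ∈ p1 t, x < y) from List.pairwise_append]
  constructor
  · rintro ⟨_, h2, h3⟩
    refine ⟨?_, iht.1 h2⟩
    intro a haR b hbT
    exact h3 a (List.mem_reverse.2 haR) b ((hmem_p1 b).2 hbT)
  · rintro ⟨hcross, hAt⟩
    refine ⟨hrev, iht.2 hAt, ?_⟩
    intro a haR b hbP
    exact hcross a (List.mem_reverse.1 haR) b ((hmem_p1 b).1 hbP)

lemma avoids_nil : Avoids [] := by
  constructor <;> rintro ⟨u, v, w, hs, -⟩ <;> simpa using List.sublist_nil.1 hs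

lemma main_aux : ∀ (n : ℕ) (σ : List ℤ), σ.length ≤ n → σ.Nodup →
    ((p1 σ).Pairwise (· < ·) ↔ Avoids σ) := by
  intro n
  induction n with
  | zero =>
    intro σ h _
    have : σ = [] := List.eq_nil_of_length_eq_zero (Nat.le_zero.1 h)
    subst this
    simp only [p1, p1Aux]
    exact ⟨fun _ => avoids_nil, fun _ => List.Pairwise.nil⟩
  | succ n ih =>
    intro σ hlen hnd
    rcases eq_or_ne σ [] with rfl | hne
    · simp only [p1, p1Aux]
      exact ⟨fun _ => avoids_nil, fun _ => List.Pairwise.nil⟩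
    · have hdec : runOf σ ++ rstOf σ = σ := runOf_append_rstOf σ
      have hr : runOf σ ≠ [] := runOf_ne_nil hne
      have hsort := runOf_sorted σ
      have hnd' : (runOf σ ++ rstOf σ).Nodup := by rw [hdec]; exact hnd
      have hdisj : (runOf σ).Disjoint (rstOf σ) := fun a ha hb => (List.nodup_append.1 hnd').2.2 a ha a hb rfl
      have hbd : ∀ y ∈ (rstOf σ).head?, (runOf σ).getLast hr < y := by
        intro y hy
        have hx : (runOf σ).getLast? = some ((runOf σ).getLast hr) :=
          List.getLast?_eq_getLast hr
        have h1 : ¬ (y < (runOf σ).getLast hr) := runOf_boundary σ _ hx y hy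
        have hmem : (runOf σ).getLast hr ∈ runOf σ := List.getLast_mem hr
        have hymem : y ∈ rstOf σ := List.mem_of_mem_head? hy
        have : (runOf σ).getLast hr ≠ y := fun h => hdisj hmem (h ▸ hymem)
        omega
      have hlt : (rstOf σ).length < σ.length := by
        have h1 := congrArg List.length hdec
        simp only [List.length_append] at h1
        have h2 : 0 < (runOf σ).length := List.length_pos_iff.2 hr
        omega
      have iht := ih (rstOf σ) (by omega) (List.nodup_append.1 hnd').2.1
      have := main_step (runOf σ) (rstOf σ) hr hsort hnd' hbd iht
      rwa [hdec] at this

end StmtThreeAux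

/-- a permutation is sortable by one pass through a
deterministic pop stack iff it avoids 231 and 312. -/
theorem stmt_3 (σ : List ℤ) (hσ : σ.Nodup) :
    (p1 σ).Pairwise (· < ·) ↔
      ¬ PContains σ [2, 3, 1] ∧ ¬ PContains σ [3, 1, 2] := by
  rw [main_aux σ.length σ le_rfl hσ]
  unfold Avoids
  simp only [pcontains_231, pcontains_312]
end

section
/- For k ≥ 2, the set of k-pass pop stack sortable permutations is not closed under pattern containment: 41352 is 2-pass pop stack sortable, contains the pattern 3241, but 3241 is not 2-pass pop stack sortable. -/
/-- 2-pass pop stack sortable permutations are not closed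
under pattern containment: 41352 is 2-pass sortable, contains 3241, but
3241 is not 2-pass sortable. -/
theorem stmt_6 :
    (p1^[2] [4, 1, 3, 5, 2]).Pairwise (· < ·) ∧
    PContains [4, 1, 3, 5, 2] [3, 2, 4, 1] ∧
    ¬ (p1^[2] [3, 2, 4, 1]).Pairwise (· < ·) := by
  refine ⟨?_, ⟨[4, 3, 5, 2], by decide, ?_⟩, ?_⟩
  · show (p1 (p1 [4, 1, 3, 5, 2])).Pairwise (· < ·)
    simp [p1, p1Aux]
  · refine ⟨rfl, ?_⟩
    intro i j hia hja hib hjb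
    simp only [List.length_cons, List.length_nil] at hia hja
    interval_cases i <;> interval_cases j <;> norm_num [List.get]
  · show ¬ (p1 (p1 [3, 2, 4, 1])).Pairwise (· < ·)
    simp [p1, p1Aux]
end
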